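/- Let H be a monoid and a ∈ H. If the singleton {a} is an atom of the power monoid P_fin(H), then a is an atom of H. Conversely, if H is strongly unit-cancellative and a is an atom of H, then {a} is an atom of P_fin(H). -/
import Mathlib


open Pointwise

/-- `a` is an atom of a monoid: it is not a unit and cannot be written as a product
of two non-units. -/
def IsAtomIn {H : Type*} [Monoid H] (a : H) : Prop :=
  ¬ IsUnit a ∧ ∀ x y : H, a = x * y → IsUnit x ∨ IsUnit y

/-- `A` is an atom of the power monoid `P_fin(H)`: it is a nonempty finite subset of
`H`, not a unit of `P_fin(H)`, and cannot be written as a product of two nonempty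
finite subsets both of which are non-units. -/
def IsAtomPfin {H : Type*} [Monoid H] [DecidableEq H] (A : Finset H) : Prop :=
  A.Nonempty ∧ ¬ IsUnit A ∧
    ∀ X Y : Finset H, X.Nonempty → Y.Nonempty → A = X * Y → IsUnit X ∨ IsUnit Y

lemma isUnit_singleton_finset_iff {H : Type*} [Monoid H] [DecidableEq H] (a : H) :
    IsUnit ({a} : Finset H) ↔ IsUnit a := by
  constructor
  · rintro ⟨u, hu⟩
    have h1 : ({a} : Finset H) * ↑u⁻¹ = 1 := by rw [← hu]; exact u.mul_inv
    have h2 : (↑u⁻¹ : Finset H) * {a} = 1 := by rw [← hu]; exact u.inv_mul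
    have hne : (↑u⁻¹ : Finset H).Nonempty := by
      have : (({a} : Finset H) * ↑u⁻¹).Nonempty := by rw [h1]; exact ⟨1, Finset.mem_one.mpr rfl⟩
      exact (Finset.mul_nonempty.mp this).2
    obtain ⟨b, hb⟩ := hne
    refine isUnit_iff_exists.mpr ⟨b, ?_, ?_⟩
    · have : a * b ∈ ({a} : Finset H) * ↑u⁻¹ :=
        Finset.mul_mem_mul (Finset.mem_singleton_self a) hb
      rw [h1] at this; exact Finset.mem_one.mp this
    · have : b * a ∈ (↑u⁻¹ : Finset H) * {a} :=
        Finset.mul_mem_mul hb (Finset.mem_singleton_self a)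
      rw [h2] at this; exact Finset.mem_one.mp this
  · exact fun h => h.map Finset.singletonMonoidHom

/-- If `{a}` is an atom of `P_fin(H)` then `a` is an atom of `H`; conversely, if `H`
is strongly unit-cancellative and `a` is an atom of `H`, then `{a}` is an atom of
`P_fin(H)`. -/
theorem stmt_7 {H : Type*} [Monoid H] [DecidableEq H] (a : H) :
    (IsAtomPfin ({a} : Finset H) → IsAtomIn a) ∧
    ((∀ x y : H, (x * y = x ∨ y * x = x) → y = 1) →
      IsAtomIn a → IsAtomPfin ({a} : Finset H)) := by
  constructor
  · rintro ⟨-, hnu, hsplit⟩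
    refine ⟨fun hu => hnu ((isUnit_singleton_finset_iff a).mpr hu), fun x y hxy => ?_⟩
    rcases hsplit {x} {y} ⟨x, Finset.mem_singleton_self x⟩ ⟨y, Finset.mem_singleton_self y⟩
        (by rw [Finset.singleton_mul_singleton, hxy]) with h | h
    · exact Or.inl ((isUnit_singleton_finset_iff x).mp h)
    · exact Or.inr ((isUnit_singleton_finset_iff y).mp h)
  · rintro hsc ⟨hna, hsplit⟩
    refine ⟨⟨a, Finset.mem_singleton_self a⟩,
      fun hu => hna ((isUnit_singleton_finset_iff a).mp hu), ?_⟩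
    intro X Y hX hY hXY
    obtain ⟨x0, hx0⟩ := hX
    obtain ⟨y0, hy0⟩ := hY
    have key : ∀ x ∈ X, ∀ y ∈ Y, x * y = a := by
      intro x hx y hy
      have hm : x * y ∈ X * Y := Finset.mul_mem_mul hx hy
      rw [← hXY] at hm
      exact Finset.mem_singleton.mp hm
    have ha0 : a = x0 * y0 := (key x0 hx0 y0 hy0).symm
    rcases hsplit x0 y0 ha0 with hux | huy
    · -- x0 is a unit, so Y = {y0}
      obtain ⟨u, hu⟩ := hux
      by_cases huy0 : IsUnit y0
      · right
        have hY1 : Y = {y0} := by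
          apply Finset.eq_singleton_iff_unique_mem.mpr ⟨hy0, ?_⟩
          intro y hy
          have : x0 * y = x0 * y0 := by rw [key x0 hx0 y hy, key x0 hx0 y0 hy0]
          rw [← hu] at this
          exact u.mul_right_inj.mp this
        rw [hY1]; exact (isUnit_singleton_finset_iff y0).mpr huy0
      · left
        have hX1 : X = {x0} := by
          apply Finset.eq_singleton_iff_unique_mem.mpr ⟨hx0, ?_⟩
          intro x hx
          have hxy0 : x * y0 = x0 * y0 := by rw [key x hx y0 hy0, key x0 hx0 y0 hy0]
          have hstep : (↑u⁻¹ * x) * y0 = y0 := by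
            rw [mul_assoc, hxy0, ← hu, ← mul_assoc, u.inv_mul, one_mul]
          have h1 : (↑u⁻¹ : H) * x = 1 := hsc y0 _ (Or.inr hstep)
          calc x = ↑u * (↑u⁻¹ * x) := by rw [← mul_assoc, u.mul_inv, one_mul]
            _ = x0 := by rw [h1, mul_one, hu]
        rw [hX1]; exact (isUnit_singleton_finset_iff x0).mpr ⟨u, hu⟩
    · -- y0 is a unit, so X = {x0}
      obtain ⟨v, hv⟩ := huy
      by_cases hux0 : IsUnit x0
      · left
        have hX1 : X = {x0} := by
          apply Finset.eq_singleton_iff_unique_mem.mpr ⟨hx0, ?_⟩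
          intro x hx
          have : x * y0 = x0 * y0 := by rw [key x hx y0 hy0, key x0 hx0 y0 hy0]
          rw [← hv] at this
          exact v.mul_left_inj.mp this
        rw [hX1]; exact (isUnit_singleton_finset_iff x0).mpr hux0
      · right
        have hY1 : Y = {y0} := by
          apply Finset.eq_singleton_iff_unique_mem.mpr ⟨hy0, ?_⟩
          intro y hy
          have hxy : x0 * y = x0 * y0 := by rw [key x0 hx0 y hy, key x0 hx0 y0 hy0]
          have hstep : x0 * (y * ↑v⁻¹) = x0 := by
            rw [← mul_assoc, hxy, ← hv, mul_assoc, v.mul_inv, mul_one]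
          have h1 : y * (↑v⁻¹ : H) = 1 := hsc x0 _ (Or.inl hstep)
          calc y = (y * ↑v⁻¹) * ↑v := by rw [mul_assoc, v.inv_mul, mul_one]
            _ = y0 := by rw [h1, one_mul, hv]
        rw [hY1]; exact (isUnit_singleton_finset_iff y0).mpr ⟨v, hv⟩
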